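/- The group of integer points SL₂(ℤ)³ acting on 2×2×2 integer cubes via the tensor cube of the standard representation preserves the discriminant Δ of a cube. -/
import Mathlib


noncomputable section

variable {R : Type*} [CommRing R]

/-- The face of a 2×2×2 cube containing `c 0 0 0` in the first direction. -/
def face1 (c : Fin 2 → Fin 2 → Fin 2 → R) : Matrix (Fin 2) (Fin 2) R :=
  Matrix.of fun j k => c 0 j k

/-- The opposite face in the first direction. -/
def face1' (c : Fin 2 → Fin 2 → Fin 2 → R) : Matrix (Fin 2) (Fin 2) R :=
  Matrix.of fun j k => c 1 j k

/-- The face containing `c 0 0 0` in the second direction. -/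
def face2 (c : Fin 2 → Fin 2 → Fin 2 → R) : Matrix (Fin 2) (Fin 2) R :=
  Matrix.of fun i k => c i 0 k

/-- The opposite face in the second direction. -/
def face2' (c : Fin 2 → Fin 2 → Fin 2 → R) : Matrix (Fin 2) (Fin 2) R :=
  Matrix.of fun i k => c i 1 k

/-- The face containing `c 0 0 0` in the third direction. -/
def face3 (c : Fin 2 → Fin 2 → Fin 2 → R) : Matrix (Fin 2) (Fin 2) R :=
  Matrix.of fun i j => c i j 0

/-- The opposite face in the third direction. -/
def face3' (c : Fin 2 → Fin 2 → Fin 2 → R) : Matrix (Fin 2) (Fin 2) R :=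
  Matrix.of fun i j => c i j 1

/-- The binary quadratic form `Q(x,y) = −det(F x − F' y)` of a pair of opposite faces. -/
def cubeQ (F F' : Matrix (Fin 2) (Fin 2) R) (x y : R) : R :=
  -(x • F - y • F').det

/-- The discriminant `b² − 4ac` of the binary quadratic form `Q(x,y) = ax² + bxy + cy²`
attached to a pair of opposite faces. -/
def cubeDisc (F F' : Matrix (Fin 2) (Fin 2) R) : R :=
  (cubeQ F F' 1 1 - cubeQ F F' 1 0 - cubeQ F F' 0 1) ^ 2 -
    4 * cubeQ F F' 1 0 * cubeQ F F' 0 1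


/-- The action of a triple of 2×2 integer matrices on 2×2×2 integer cubes via the tensor
cube of the standard representation. -/
def cubeAct (g₁ g₂ g₃ : Matrix (Fin 2) (Fin 2) ℤ) (c : Fin 2 → Fin 2 → Fin 2 → ℤ) :
    Fin 2 → Fin 2 → Fin 2 → ℤ :=
  fun i j k => ∑ i', ∑ j', ∑ k', g₁ i i' * g₂ j j' * g₃ k k' * c i' j' k'

section Aux

variable {R : Type*} [CommRing R]

lemma cubeQ_mul_mul (g T A B : Matrix (Fin 2) (Fin 2) R) (x y : R) :
    cubeQ (g * A * T) (g * B * T) x y = g.det * T.det * cubeQ A B x y := by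
  have h : x • (g * A * T) - y • (g * B * T) = g * ((x • A - y • B) * T) := by
    ext i j
    simp only [Matrix.sub_apply, Matrix.smul_apply, Matrix.mul_apply, smul_eq_mul,
      Fin.sum_univ_two]
    ring
  rw [cubeQ, h, Matrix.det_mul, Matrix.det_mul, cubeQ]
  ring

lemma cubeQ_smul_comb (A B : Matrix (Fin 2) (Fin 2) R) (a b c d x y : R) :
    cubeQ (a • A + b • B) (c • A + d • B) x y
      = cubeQ A B (a * x - c * y) (d * y - b * x) := by
  simp only [cubeQ, Matrix.det_fin_two, Matrix.sub_apply, Matrix.smul_apply,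
    Matrix.add_apply, smul_eq_mul]
  ring

lemma cubeQ_quadratic (A B : Matrix (Fin 2) (Fin 2) R) (x y : R) :
    cubeQ A B x y = x ^ 2 * cubeQ A B 1 0
      + x * y * (cubeQ A B 1 1 - cubeQ A B 1 0 - cubeQ A B 0 1)
      + y ^ 2 * cubeQ A B 0 1 := by
  simp only [cubeQ, Matrix.det_fin_two, Matrix.sub_apply, Matrix.smul_apply, smul_eq_mul]
  ring

lemma face1_cubeAct (g₁ g₂ g₃ : Matrix (Fin 2) (Fin 2) ℤ) (c : Fin 2 → Fin 2 → Fin 2 → ℤ) :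
    face1 (cubeAct g₁ g₂ g₃ c)
      = g₂ * (g₁ 0 0 • face1 c + g₁ 0 1 • face1' c) * g₃.transpose := by
  ext j k
  simp only [face1, face1', cubeAct, Matrix.of_apply, Matrix.mul_apply, Matrix.add_apply,
    Matrix.smul_apply, Matrix.transpose_apply, smul_eq_mul, Fin.sum_univ_two]
  ring

lemma face1'_cubeAct (g₁ g₂ g₃ : Matrix (Fin 2) (Fin 2) ℤ) (c : Fin 2 → Fin 2 → Fin 2 → ℤ) :
    face1' (cubeAct g₁ g₂ g₃ c)
      = g₂ * (g₁ 1 0 • face1 c + g₁ 1 1 • face1' c) * g₃.transpose := by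
  ext j k
  simp only [face1, face1', cubeAct, Matrix.of_apply, Matrix.mul_apply, Matrix.add_apply,
    Matrix.smul_apply, Matrix.transpose_apply, smul_eq_mul, Fin.sum_univ_two]
  ring

end Aux

/-- `SL₂(ℤ)³`, acting on 2×2×2 integer cubes via the tensor cube of the standard
representation, preserves the discriminant of a cube. -/
theorem cube_disc_SL2_invariant (g₁ g₂ g₃ : Matrix.SpecialLinearGroup (Fin 2) ℤ)
    (c : Fin 2 → Fin 2 → Fin 2 → ℤ) :
    cubeDisc (face1 (cubeAct (g₁ : Matrix (Fin 2) (Fin 2) ℤ) g₂ g₃ c))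
        (face1' (cubeAct (g₁ : Matrix (Fin 2) (Fin 2) ℤ) g₂ g₃ c)) =
      cubeDisc (face1 c) (face1' c) := by
  set A := face1 c
  set B := face1' c
  have hg2 : ((g₂ : Matrix (Fin 2) (Fin 2) ℤ)).det = 1 := g₂.2
  have hg3 : ((g₃ : Matrix (Fin 2) (Fin 2) ℤ)).transpose.det = 1 := by
    rw [Matrix.det_transpose]; exact g₃.2
  have h1 : ((g₁ : Matrix (Fin 2) (Fin 2) ℤ)) 0 0 * (g₁ : Matrix (Fin 2) (Fin 2) ℤ) 1 1
      - (g₁ : Matrix (Fin 2) (Fin 2) ℤ) 0 1 * (g₁ : Matrix (Fin 2) (Fin 2) ℤ) 1 0 = 1 := by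
    have := g₁.2
    rwa [Matrix.det_fin_two] at this
  set a := ((g₁ : Matrix (Fin 2) (Fin 2) ℤ)) 0 0
  set b := ((g₁ : Matrix (Fin 2) (Fin 2) ℤ)) 0 1
  set e := ((g₁ : Matrix (Fin 2) (Fin 2) ℤ)) 1 0
  set d := ((g₁ : Matrix (Fin 2) (Fin 2) ℤ)) 1 1
  rw [cubeDisc, face1_cubeAct, face1'_cubeAct]
  simp only [cubeQ_mul_mul, hg2, hg3, one_mul, cubeQ_smul_comb]
  rw [cubeDisc]
  rw [cubeQ_quadratic A B (a * 1 - e * 1), cubeQ_quadratic A B (a * 1 - e * 0),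
    cubeQ_quadratic A B (a * 0 - e * 1)]
  set P := cubeQ A B 1 0
  set Q := cubeQ A B 0 1
  set M := cubeQ A B 1 1
  linear_combination (a * d - b * e + 1) * ((M - P - Q) ^ 2 - 4 * P * Q) * h1
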